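/- Any two countable atomless Boolean algebras are isomorphic. -/

import Mathlib

open Finset

noncomputable section
open scoped Classical

namespace CABAIso

variable {α β γ : Type*} [BooleanAlgebra α] [BooleanAlgebra β] [DecidableEq γ]
variable [DecidableEq (α × β)]

/-- The "atomic pattern" of a subset `t` of a finite set `s` of generators. -/
def patt (f : γ → α) (s t : Finset γ) : α :=
  t.inf f ⊓ (s \ t).inf fun y => (f y)ᶜ

theorem patt_le_of_mem (f : γ → α) {t : Finset γ} (s : Finset γ) {p : γ} (hp : p ∈ t) :
    patt f s t ≤ f p :=
  inf_le_left.trans (Finset.inf_le hp)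

theorem patt_le_compl (f : γ → α) {s t : Finset γ} {p : γ} (hp : p ∈ s) (hpt : p ∉ t) :
    patt f s t ≤ (f p)ᶜ :=
  inf_le_right.trans (Finset.inf_le (mem_sdiff.2 ⟨hp, hpt⟩))

theorem patt_disjoint (f : γ → α) {s t u : Finset γ} (ht : t ⊆ s) (hu : u ⊆ s) (hne : t ≠ u) :
    patt f s t ⊓ patt f s u = ⊥ := by
  have : (¬ t ⊆ u) ∨ (¬ u ⊆ t) := by
    by_contra h
    push_neg at h
    exact hne (subset_antisymm h.1 h.2)
  rcases this with h | h
  · obtain ⟨p, hpt, hpu⟩ := Finset.not_subset.1 h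
    have h1 : patt f s t ⊓ patt f s u ≤ f p ⊓ (f p)ᶜ :=
      inf_le_inf (patt_le_of_mem f s hpt) (patt_le_compl f (ht hpt) hpu)
    simpa using le_bot_iff.1 (h1.trans_eq (inf_compl_eq_bot))
  · obtain ⟨p, hpu, hpt⟩ := Finset.not_subset.1 h
    have h1 : patt f s t ⊓ patt f s u ≤ (f p)ᶜ ⊓ f p :=
      inf_le_inf (patt_le_compl f (hu hpu) hpt) (patt_le_of_mem f s hpu)
    simpa using le_bot_iff.1 (h1.trans_eq (compl_inf_eq_bot))

theorem patt_insert_not_mem (f : γ → α) {s t : Finset γ} {x : γ} (hxt : x ∉ t) :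
    patt f (insert x s) t = (f x)ᶜ ⊓ patt f s t := by
  rw [patt, patt, insert_sdiff_of_notMem _ hxt, inf_insert, inf_left_comm]

theorem patt_insert_mem (f : γ → α) {s t : Finset γ} {x : γ} (hxs : x ∉ s) (hxt : x ∉ t) :
    patt f (insert x s) (insert x t) = f x ⊓ patt f s t := by
  have h : insert x s \ insert x t = s \ t := by
    ext y
    simp only [mem_sdiff, mem_insert]
    constructor
    · rintro ⟨hy | hy, hy2⟩
      · exact absurd (hy ▸ Or.inl rfl) hy2
      · exact ⟨hy, fun hc => hy2 (Or.inr hc)⟩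
    · rintro ⟨hy, hy2⟩
      exact ⟨Or.inr hy, fun hc => hc.elim (fun e => hxs (e ▸ hy)) hy2⟩
  rw [patt, patt, h, inf_insert, inf_assoc]

theorem sup_patt (f : γ → α) (s : Finset γ) : s.powerset.sup (patt f s) = ⊤ := by
  induction s using Finset.induction_on with
  | empty => simp [patt]
  | insert x s hx ih =>
      rw [powerset_insert, sup_union, sup_image]
      have h1 : ∀ t ∈ s.powerset, patt f (insert x s) t = (f x)ᶜ ⊓ patt f s t := fun t ht =>
        patt_insert_not_mem f fun hc => hx (mem_powerset.1 ht hc)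
      have h2 : ∀ t ∈ s.powerset, (patt f (insert x s) ∘ insert x) t = f x ⊓ patt f s t :=
        fun t ht => patt_insert_mem f hx fun hc => hx (mem_powerset.1 ht hc)
      rw [Finset.sup_congr rfl h1, Finset.sup_congr rfl h2, ← sup_inf_distrib_left,
        ← sup_inf_distrib_left, ih, inf_top_eq, inf_top_eq, compl_sup_eq_top]

theorem le_transfer {s : Finset γ} {f : γ → α} {g : γ → β}
    (H : ∀ t ⊆ s, patt f s t = ⊥ → patt g s t = ⊥)
    {p q : γ} (hp : p ∈ s) (hq : q ∈ s) (hle : f p ≤ f q) : g p ≤ g q := by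
  rw [← sdiff_eq_bot_iff, sdiff_eq]
  have key : ∀ t ∈ s.powerset, g p ⊓ (g q)ᶜ ⊓ patt g s t = ⊥ := by
    intro t ht
    rw [mem_powerset] at ht
    by_cases hpt : p ∈ t
    · by_cases hqt : q ∈ t
      · refine le_bot_iff.1 ?_
        calc g p ⊓ (g q)ᶜ ⊓ patt g s t ≤ (g q)ᶜ ⊓ g q :=
              inf_le_inf inf_le_right (patt_le_of_mem g s hqt)
          _ = ⊥ := compl_inf_eq_bot
      · have hf : patt f s t = ⊥ := by
          refine le_bot_iff.1 ?_
          calc patt f s t ≤ f p ⊓ (f q)ᶜ :=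
                le_inf (patt_le_of_mem f s hpt) (patt_le_compl f hq hqt)
            _ ≤ f q ⊓ (f q)ᶜ := inf_le_inf_right _ hle
            _ = ⊥ := inf_compl_eq_bot
        rw [H t ht hf, inf_bot_eq]
    · refine le_bot_iff.1 ?_
      calc g p ⊓ (g q)ᶜ ⊓ patt g s t ≤ g p ⊓ (g p)ᶜ :=
            inf_le_inf (inf_le_left) (patt_le_compl g hp hpt)
        _ = ⊥ := inf_compl_eq_bot
  calc g p ⊓ (g q)ᶜ = (g p ⊓ (g q)ᶜ) ⊓ s.powerset.sup (patt g s) := by rw [sup_patt, inf_top_eq]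
    _ = s.powerset.sup fun t => g p ⊓ (g q)ᶜ ⊓ patt g s t := sup_inf_distrib_left _ _ _
    _ = ⊥ := le_bot_iff.1 (Finset.sup_le fun t ht => (key t ht).le)


/-- A finite set of pairs is a "good" partial isomorphism if corresponding atomic
patterns vanish simultaneously. -/
def good (s : Finset (α × β)) : Prop :=
  ∀ t ⊆ s, (patt Prod.fst s t = ⊥ ↔ patt Prod.snd s t = ⊥)

theorem good_empty [Nontrivial α] [Nontrivial β] : good (∅ : Finset (α × β)) := by
  intro t ht
  rw [Finset.subset_empty.1 ht]
  simp [patt]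

/-- Key extension lemma: any good partial isomorphism can be extended to be defined
at any `a : α`, using atomlessness of `β`. -/
theorem exists_across (hB : ∀ b : β, ¬ IsAtom b) {s : Finset (α × β)} (hs : good s) (a : α) :
    ∃ b : β, good (insert (a, b) s) := by
  by_cases hmem : ∃ b, (a, b) ∈ s
  · obtain ⟨b, hb⟩ := hmem
    exact ⟨b, by rwa [Finset.insert_eq_self.2 hb]⟩
  push_neg at hmem
  have key : ∀ t : Finset (α × β), ∃ c : β, t ⊆ s →
      c ≤ patt Prod.snd s t ∧ (c = ⊥ ↔ a ⊓ patt Prod.fst s t = ⊥) ∧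
      (patt Prod.snd s t ≤ c ↔ patt Prod.fst s t ≤ a) := by
    intro t
    by_cases hts : t ⊆ s
    swap
    · exact ⟨⊥, fun h => absurd h hts⟩
    by_cases h1 : a ⊓ patt Prod.fst s t = ⊥
    · refine ⟨⊥, fun _ => ⟨bot_le, by simp [h1], ?_⟩⟩
      rw [le_bot_iff]
      constructor
      · intro hq0
        rw [(hs t hts).2 hq0]
        exact bot_le
      · intro hpa
        refine (hs t hts).1 ?_
        rw [← h1, inf_comm, inf_eq_left.2 hpa]
    · by_cases h2 : patt Prod.fst s t ≤ a
      · refine ⟨patt Prod.snd s t, fun _ => ⟨le_rfl, ?_, by simp [h2]⟩⟩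
        rw [inf_comm, inf_eq_left.2 h2]
        exact (hs t hts).symm
      · have hp0 : patt Prod.fst s t ≠ ⊥ := fun hc => h1 (by rw [hc, inf_bot_eq])
        have hq0 : patt Prod.snd s t ≠ ⊥ := fun hc => hp0 ((hs t hts).2 hc)
        have := hB (patt Prod.snd s t)
        rw [IsAtom] at this
        push_neg at this
        obtain ⟨c, hcq, hc0⟩ := this hq0
        refine ⟨c, fun _ => ⟨hcq.le, ?_, ?_⟩⟩
        · simp only [hc0, false_iff]
          exact h1
        · constructor
          · intro hle
            exact absurd (le_antisymm hcq.le hle) hcq.ne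
          · intro hle
            exact absurd hle h2
  choose c hc using key
  set b := s.powerset.sup c with hbdef
  have hbt : ∀ t ⊆ s, patt Prod.snd s t ⊓ b = c t := by
    intro t ht
    rw [hbdef, sup_inf_distrib_left]
    refine le_antisymm (Finset.sup_le fun u hu => ?_) ?_
    · rw [mem_powerset] at hu
      by_cases hut : u = t
      · rw [hut]
        exact inf_le_right
      · calc patt Prod.snd s t ⊓ c u ≤ patt Prod.snd s t ⊓ patt Prod.snd s u :=
              inf_le_inf_left _ (hc u hu).1
          _ = ⊥ := patt_disjoint _ ht hu (Ne.symm hut)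
          _ ≤ c t := bot_le
    · refine le_trans (le_inf (hc t ht).1 le_rfl) ?_
      exact Finset.le_sup (f := fun u => patt Prod.snd s t ⊓ c u) (mem_powerset.2 ht)
  refine ⟨b, ?_⟩
  intro t' ht'
  have hab : (a, b) ∉ s := hmem b
  by_cases hm : (a, b) ∈ t'
  · set t := t'.erase (a, b) with htdef
    have ht'' : t' = insert (a, b) t := (Finset.insert_erase hm).symm
    have ht : t ⊆ s := by
      rw [htdef, ← Finset.erase_insert hab]
      exact Finset.erase_subset_erase _ ht'
    have hat : (a, b) ∉ t := Finset.notMem_erase _ _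
    rw [ht'', patt_insert_mem _ hab hat, patt_insert_mem _ hab hat]
    show a ⊓ patt Prod.fst s t = ⊥ ↔ b ⊓ patt Prod.snd s t = ⊥
    rw [inf_comm b, hbt t ht]
    exact ((hc t ht).2.1).symm
  · have ht : t' ⊆ s := fun x hx =>
      (Finset.mem_insert.1 (ht' hx)).resolve_left (fun e => hm (e ▸ hx))
    rw [patt_insert_not_mem _ hm, patt_insert_not_mem _ hm]
    show aᶜ ⊓ patt Prod.fst s t' = ⊥ ↔ bᶜ ⊓ patt Prod.snd s t' = ⊥
    rw [inf_comm (aᶜ), inf_comm (bᶜ), ← sdiff_eq, ← sdiff_eq, sdiff_eq_bot_iff, sdiff_eq_bot_iff]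
    constructor
    · intro hle
      calc patt Prod.snd s t' ≤ c t' := (hc t' ht).2.2.2 hle
        _ = patt Prod.snd s t' ⊓ b := (hbt t' ht).symm
        _ ≤ b := inf_le_right
    · intro hle
      refine (hc t' ht).2.2.1 ?_
      rw [← hbt t' ht]
      exact le_inf le_rfl hle


theorem good_le_iff {s : Finset (α × β)} (hs : good s) {a : α} {b : β} {a' : α} {b' : β}
    (h1 : (a, b) ∈ s) (h2 : (a', b') ∈ s) : a ≤ a' ↔ b ≤ b' := by
  constructor
  · intro h
    exact le_transfer (f := Prod.fst) (g := Prod.snd) (fun t ht => (hs t ht).1) h1 h2 h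
  · intro h
    exact le_transfer (f := Prod.snd) (g := Prod.fst) (fun t ht => (hs t ht).2) h1 h2 h

theorem patt_image {δ : Type*} [DecidableEq δ] {e : γ → δ} (he : Function.Injective e)
    (g : δ → α) (s t : Finset γ) :
    patt g (s.image e) (t.image e) = patt (g ∘ e) s t := by
  rw [patt, patt, ← Finset.image_sdiff _ _ he, Finset.inf_image, Finset.inf_image]
  rfl

theorem good_comm [DecidableEq (β × α)] {s : Finset (α × β)} (h : good s) :
    good (s.image Prod.swap) := by
  intro t' ht'
  have hswap : Function.Injective (Prod.swap : α × β → β × α) := Prod.swap_injective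
  set t := t'.image Prod.swap with htdef
  have ht : t ⊆ s := by
    intro p hp
    obtain ⟨q, hq, rfl⟩ := Finset.mem_image.1 hp
    obtain ⟨r, hr, rfl⟩ := Finset.mem_image.1 (ht' hq)
    simpa using hr
  have ht'' : t' = t.image Prod.swap := by
    rw [htdef, Finset.image_image]
    simp
  have e1 : patt Prod.fst (s.image Prod.swap) t' = patt Prod.snd s t := by
    rw [ht'']
    exact patt_image hswap Prod.fst s t
  have e2 : patt Prod.snd (s.image Prod.swap) t' = patt Prod.fst s t := by
    rw [ht'']
    exact patt_image hswap Prod.snd s t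
  rw [e1, e2]
  exact (h t ht).symm

/-- The type of good partial isomorphisms between Boolean algebras. -/
def PartialIso (α β : Type*) [BooleanAlgebra α] [BooleanAlgebra β] [DecidableEq (α × β)] :
    Type _ :=
  {s : Finset (α × β) // good s}

instance : Preorder (PartialIso α β) := Subtype.preorder _

instance [Nontrivial α] [Nontrivial β] : Inhabited (PartialIso α β) := ⟨⟨∅, good_empty⟩⟩

instance [Countable α] [Countable β] : Countable (PartialIso α β) := by
  unfold PartialIso
  infer_instance

/-- Swapping a good partial isomorphism. -/
def PartialIso.comm [DecidableEq (β × α)] (f : PartialIso α β) : PartialIso β α :=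
  ⟨f.val.image Prod.swap, good_comm f.prop⟩

/-- Partial isomorphisms defined at `a : α` are cofinal. -/
def definedAtLeft (hB : ∀ b : β, ¬ IsAtom b) (a : α) : Order.Cofinal (PartialIso α β) where
  carrier := {f | ∃ b : β, (a, b) ∈ f.val}
  isCofinal f := by
    obtain ⟨b, hb⟩ := exists_across hB f.prop a
    exact ⟨⟨insert (a, b) f.val, hb⟩, ⟨b, Finset.mem_insert_self _ _⟩,
      Finset.subset_insert _ _⟩

/-- Partial isomorphisms defined at `b : β` are cofinal. -/
def definedAtRight [DecidableEq (β × α)] (hA : ∀ a : α, ¬ IsAtom a) (b : β) :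
    Order.Cofinal (PartialIso α β) where
  carrier := {f | ∃ a : α, (a, b) ∈ f.val}
  isCofinal f := by
    obtain ⟨f', ⟨a, ha⟩, hl⟩ := (definedAtLeft hA b).isCofinal f.comm
    refine ⟨f'.comm, ⟨a, Finset.mem_image.2 ⟨(b, a), ha, rfl⟩⟩, ?_⟩
    intro p hp
    exact Finset.mem_image.2 ⟨p.swap, hl (Finset.mem_image.2 ⟨p, hp, rfl⟩), p.swap_swap⟩

end CABAIso

/-- Any two countable atomless Boolean algebras are isomorphic. -/
theorem countable_atomless_boolean_algebras_iso {A B : Type*}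
    [BooleanAlgebra A] [BooleanAlgebra B]
    [Countable A] [Infinite A] [Countable B] [Infinite B]
    (hA : ∀ a : A, ¬ IsAtom a) (hB : ∀ b : B, ¬ IsAtom b) :
    Nonempty (A ≃o B) := by
  classical
  obtain ⟨_⟩ := nonempty_encodable (A ⊕ B)
  let to_cofinal : A ⊕ B → Order.Cofinal (CABAIso.PartialIso A B) := fun p =>
    Sum.recOn p (CABAIso.definedAtLeft hB) (CABAIso.definedAtRight hA)
  let I : Order.Ideal (CABAIso.PartialIso A B) := Order.idealOfCofinals default to_cofinal
  have hF : ∀ a : A, ∃ b : B, ∃ m ∈ I, (a, b) ∈ m.val := by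
    intro a
    obtain ⟨m, hmD, hmI⟩ := Order.cofinal_meets_idealOfCofinals default to_cofinal (Sum.inl a)
    obtain ⟨b, hb⟩ := hmD
    exact ⟨b, m, hmI, hb⟩
  have hG : ∀ b : B, ∃ a : A, ∃ m ∈ I, (a, b) ∈ m.val := by
    intro b
    obtain ⟨m, hmD, hmI⟩ := Order.cofinal_meets_idealOfCofinals default to_cofinal (Sum.inr b)
    obtain ⟨a, ha⟩ := hmD
    exact ⟨a, m, hmI, ha⟩
  choose f hf using hF
  choose g hg using hG
  have common : ∀ {a : A} {b : B} {a' : A} {b' : B},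
      (∃ m ∈ I, (a, b) ∈ m.val) → (∃ m ∈ I, (a', b') ∈ m.val) → (a ≤ a' ↔ b ≤ b') := by
    rintro a b a' b' ⟨m1, hm1, h1⟩ ⟨m2, hm2, h2⟩
    obtain ⟨m, hm, hle1, hle2⟩ := I.directed m1 hm1 m2 hm2
    exact CABAIso.good_le_iff m.prop (hle1 h1) (hle2 h2)
  have gf : ∀ a, g (f a) = a := fun a =>
    le_antisymm ((common (hg (f a)) (hf a)).2 le_rfl) ((common (hf a) (hg (f a))).2 le_rfl)
  have fg : ∀ b, f (g b) = b := fun b =>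
    le_antisymm ((common (hf (g b)) (hg b)).1 le_rfl) ((common (hg b) (hf (g b))).1 le_rfl)
  exact ⟨{ toFun := f, invFun := g, left_inv := gf, right_inv := fg,
           map_rel_iff' := fun {a a'} => (common (hf a) (hf a')).symm }⟩
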